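/- Let a < b be real numbers and let w : ℝ³ → ℝ³ be continuously differentiable on a neighborhood of the closed cylinder D̄ × [a,b], with div w = 0 there, and suppose w₁(x)x₁ + w₂(x)x₂ = 0 whenever x₁² + x₂² = 1 and x₃ ∈ [a,b]. Then ∫_{D×[a,b]} (w₁² + w₂²) dx ≤ 2 ∫_{D×[a,b]} ( Σ_{i,j=1}^{2} (∂_{x_i} w_j)² + (∂_{x₃} w₃)² ) dx. -/

import Mathlib

open MeasureTheory

/-- Partial derivative `∂_{x_i} f` of a scalar function on `ℝ³`. -/
noncomputable def pd (i : Fin 3) (f : (Fin 3 → ℝ) → ℝ) (x : Fin 3 → ℝ) : ℝ :=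
  fderiv ℝ f x (Pi.single i 1)

/-- The solid finite cylinder `D × [a,b]` with `D` the open unit disk. -/
def solidCyl (a b : ℝ) : Set (Fin 3 → ℝ) :=
  {x | x 0 ^ 2 + x 1 ^ 2 < 1 ∧ x 2 ∈ Set.Icc a b}

/-- The closed finite cylinder `D̄ × [a,b]`. -/
def closedCyl (a b : ℝ) : Set (Fin 3 → ℝ) :=
  {x | x 0 ^ 2 + x 1 ^ 2 ≤ 1 ∧ x 2 ∈ Set.Icc a b}

namespace Stmt12Aux

lemma measurableSet_solidCyl (a b : ℝ) : MeasurableSet (solidCyl a b) := by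
  have h1 : IsOpen {x : Fin 3 → ℝ | x 0 ^ 2 + x 1 ^ 2 < 1} :=
    isOpen_lt (by fun_prop) continuous_const
  have h2 : IsClosed {x : Fin 3 → ℝ | x 2 ∈ Set.Icc a b} :=
    IsClosed.preimage (continuous_apply 2) isClosed_Icc
  exact (h1.measurableSet).inter h2.measurableSet

lemma solidCyl_subset_closed (a b : ℝ) : solidCyl a b ⊆ closedCyl a b :=
  fun x hx => ⟨hx.1.le, hx.2⟩

lemma isCompact_closedCyl (a b : ℝ) : IsCompact (closedCyl a b) := by
  have hcl : IsClosed (closedCyl a b) := by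
    have h1 : IsClosed {x : Fin 3 → ℝ | x 0 ^ 2 + x 1 ^ 2 ≤ 1} :=
      isClosed_le (by fun_prop) continuous_const
    have h2 : IsClosed {x : Fin 3 → ℝ | x 2 ∈ Set.Icc a b} :=
      IsClosed.preimage (continuous_apply 2) isClosed_Icc
    exact h1.inter h2
  refine IsCompact.of_isClosed_subset (isCompact_Icc
    (a := fun _ : Fin 3 => min (-1) a) (b := fun _ => max 1 b)) hcl ?_
  rintro x ⟨h1, h2⟩
  have a0 : -1 ≤ x 0 ∧ x 0 ≤ 1 :=
    abs_le.1 (abs_le_one_iff_mul_self_le_one.2 (by nlinarith [sq_nonneg (x 1)]))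
  have a1 : -1 ≤ x 1 ∧ x 1 ≤ 1 :=
    abs_le.1 (abs_le_one_iff_mul_self_le_one.2 (by nlinarith [sq_nonneg (x 0)]))
  constructor
  · intro i
    fin_cases i
    · exact le_trans (min_le_left _ _) a0.1
    · exact le_trans (min_le_left _ _) a1.1
    · exact le_trans (min_le_right _ _) h2.1
  · intro i
    fin_cases i
    · exact le_trans a0.2 (le_max_left _ _)
    · exact le_trans a1.2 (le_max_left _ _)
    · exact le_trans h2.2 (le_max_right _ _)

lemma integrableOn_cyl {a b : ℝ} {f : (Fin 3 → ℝ) → ℝ}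
    (hf : ContinuousOn f (closedCyl a b)) : IntegrableOn f (solidCyl a b) :=
  (hf.integrableOn_compact (isCompact_closedCyl a b)).mono_set (solidCyl_subset_closed a b)

lemma pd_continuousOn {U : Set (Fin 3 → ℝ)} (hU : IsOpen U) {f} (hf : ContDiffOn ℝ 1 f U)
    (i : Fin 3) : ContinuousOn (pd i f) U := by
  have h := hf.continuousOn_fderiv_of_isOpen hU le_rfl
  exact h.clm_apply continuousOn_const

lemma hasDerivAt_pd {U : Set (Fin 3 → ℝ)} (hU : IsOpen U) {f} (hf : ContDiffOn ℝ 1 f U)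
    (i : Fin 3) (c : Fin 3 → ℝ) (t : ℝ) (h : c + t • (Pi.single i 1 : Fin 3 → ℝ) ∈ U) :
    HasDerivAt (fun s => f (c + s • (Pi.single i 1 : Fin 3 → ℝ)))
      (pd i f (c + t • (Pi.single i 1 : Fin 3 → ℝ))) t := by
  have hdiff : DifferentiableAt ℝ f (c + t • (Pi.single i 1 : Fin 3 → ℝ)) :=
    (hf.differentiableOn one_ne_zero).differentiableAt (hU.mem_nhds h)
  have h2 : HasDerivAt (fun s : ℝ => c + s • (Pi.single i 1 : Fin 3 → ℝ))
      (Pi.single i 1 : Fin 3 → ℝ) t := by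
    simpa using ((hasDerivAt_id t).smul_const (Pi.single i 1 : Fin 3 → ℝ)).const_add c
  exact hdiff.hasFDerivAt.comp_hasDerivAt t h2

lemma insertNth_affine (i : Fin 3) (t : ℝ) (y : Fin 2 → ℝ) :
    Fin.insertNth (α := fun _ => ℝ) i t y
      = Fin.insertNth (α := fun _ => ℝ) i 0 y + t • (Pi.single i 1 : Fin 3 → ℝ) := by
  funext j
  refine Fin.succAboveCases i ?_ ?_ j
  · simp
  · intro k
    simp [Pi.single_eq_of_ne (Fin.succAbove_ne i k)]

lemma integral_pd_eq_zero {a b : ℝ} {U : Set (Fin 3 → ℝ)} (hU : IsOpen U)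
    (hsub : closedCyl a b ⊆ U) {G : (Fin 3 → ℝ) → ℝ} (hG : ContDiffOn ℝ 1 G U)
    (hG0 : ∀ x : Fin 3 → ℝ, x 0 ^ 2 + x 1 ^ 2 = 1 → x 2 ∈ Set.Icc a b → G x = 0)
    (i : Fin 3) (hi : i = 0 ∨ i = 1) :
    ∫ x in solidCyl a b, pd i G x = 0 := by
  classical
  have hcoord : ∀ (t : ℝ) (y : Fin 2 → ℝ),
      (Fin.insertNth (α := fun _ => ℝ) i t y) 0 ^ 2 + (Fin.insertNth (α := fun _ => ℝ) i t y) 1 ^ 2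
        = t ^ 2 + (y 0) ^ 2 ∧ (Fin.insertNth (α := fun _ => ℝ) i t y) 2 = y 1 := by
    intro t y
    rcases hi with rfl | rfl
    · exact ⟨by rw [show (Fin.insertNth (α := fun _ => ℝ) 0 t y) 0 = t from rfl,
        show (Fin.insertNth (α := fun _ => ℝ) 0 t y) 1 = y 0 from rfl], rfl⟩
    · exact ⟨by rw [show (Fin.insertNth (α := fun _ => ℝ) 1 t y) 0 = y 0 from rfl,
        show (Fin.insertNth (α := fun _ => ℝ) 1 t y) 1 = t from rfl]; ring, rfl⟩
  set e := MeasurableEquiv.piFinSuccAbove (fun _ : Fin 3 => ℝ) i with he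
  have hep : MeasurePreserving e := volume_preserving_piFinSuccAbove _ i
  have hGc : ContinuousOn (pd i G) (closedCyl a b) := (pd_continuousOn hU hG i).mono hsub
  have hmeas := measurableSet_solidCyl a b
  have hind : Integrable ((solidCyl a b).indicator (pd i G)) :=
    (integrable_indicator_iff hmeas).2 (integrableOn_cyl hGc)
  have heps : MeasurePreserving e.symm := MeasurePreserving.symm e hep
  have hcomp : Integrable (((solidCyl a b).indicator (pd i G)) ∘ e.symm) :=
    (heps.integrable_comp_emb e.symm.measurableEmbedding).2 hind
  have h2 : ∫ p : ℝ × (Fin 2 → ℝ), ((solidCyl a b).indicator (pd i G)) (e.symm p)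
      = ∫ x, ((solidCyl a b).indicator (pd i G)) x :=
    heps.integral_comp e.symm.measurableEmbedding _
  rw [Measure.volume_eq_prod] at hcomp
  have hinner : ∀ y : Fin 2 → ℝ,
      (∫ t : ℝ, ((solidCyl a b).indicator (pd i G)) (e.symm (t, y))) = 0 := by
    intro y
    have hmem : ∀ t : ℝ, (Fin.insertNth (α := fun _ => ℝ) i t y ∈ solidCyl a b)
        ↔ (t ^ 2 + (y 0) ^ 2 < 1 ∧ y 1 ∈ Set.Icc a b) := by
      intro t
      have h := hcoord t y
      simp only [solidCyl, Set.mem_setOf_eq, h.1, h.2]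
    by_cases hy : (y 0) ^ 2 < 1 ∧ y 1 ∈ Set.Icc a b
    · obtain ⟨hy0, hy1⟩ := hy
      set s := Real.sqrt (1 - (y 0) ^ 2) with hs
      have hs2 : s ^ 2 = 1 - (y 0) ^ 2 := Real.sq_sqrt (by linarith)
      have hs0 : 0 < s := Real.sqrt_pos.2 (by linarith)
      have hIoo : ∀ t : ℝ, (Fin.insertNth (α := fun _ => ℝ) i t y ∈ solidCyl a b)
          ↔ t ∈ Set.Ioo (-s) s := by
        intro t
        rw [hmem t]
        constructor
        · rintro ⟨h1, -⟩
          constructor <;> nlinarith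
        · rintro ⟨h1, h2'⟩
          exact ⟨by nlinarith, hy1⟩
      have hfun : (fun t : ℝ => ((solidCyl a b).indicator (pd i G)) (e.symm (t, y)))
          = (Set.Ioo (-s) s).indicator
              (fun t => pd i G (Fin.insertNth (α := fun _ => ℝ) i t y)) := by
        funext t
        have hee : e.symm (t, y) = Fin.insertNth (α := fun _ => ℝ) i t y := rfl
        rw [hee]
        by_cases ht : t ∈ Set.Ioo (-s) s
        · rw [Set.indicator_of_mem ((hIoo t).2 ht), Set.indicator_of_mem ht]
        · rw [Set.indicator_of_notMem (fun hc => ht ((hIoo t).1 hc)),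
            Set.indicator_of_notMem ht]
      have hclosed : ∀ t ∈ Set.uIcc (-s) s, Fin.insertNth (α := fun _ => ℝ) i t y ∈ U := by
        intro t ht
        apply hsub
        rw [Set.uIcc_of_le (by linarith)] at ht
        refine ⟨?_, ?_⟩
        · rw [(hcoord t y).1]
          nlinarith [ht.1, ht.2]
        · rw [(hcoord t y).2]; exact hy1
      have hderiv : ∀ t ∈ Set.uIcc (-s) s,
          HasDerivAt (fun t => G (Fin.insertNth (α := fun _ => ℝ) i t y))
            (pd i G (Fin.insertNth (α := fun _ => ℝ) i t y)) t := by
        intro t ht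
        have h := hasDerivAt_pd hU hG i (Fin.insertNth (α := fun _ => ℝ) i 0 y) t
          (by rw [← insertNth_affine]; exact hclosed t ht)
        simp only [← insertNth_affine] at h
        exact h
      have hcont : ContinuousOn (fun t : ℝ => pd i G (Fin.insertNth (α := fun _ => ℝ) i t y))
          (Set.uIcc (-s) s) := by
        have hc : Continuous (fun t : ℝ => Fin.insertNth (α := fun _ => ℝ) i t y) := by
          have hrw : (fun t : ℝ => Fin.insertNth (α := fun _ => ℝ) i t y)
              = fun t : ℝ => Fin.insertNth (α := fun _ => ℝ) i 0 y
                + t • (Pi.single i 1 : Fin 3 → ℝ) := funext fun t => insertNth_affine i t y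
          rw [hrw]
          fun_prop
        exact ContinuousOn.comp (pd_continuousOn hU hG i) hc.continuousOn hclosed
      have hFTC : ∫ t in (-s)..s, pd i G (Fin.insertNth (α := fun _ => ℝ) i t y)
          = G (Fin.insertNth (α := fun _ => ℝ) i s y)
            - G (Fin.insertNth (α := fun _ => ℝ) i (-s) y) :=
        intervalIntegral.integral_eq_sub_of_hasDerivAt hderiv hcont.intervalIntegrable
      have hend : ∀ t : ℝ, t ^ 2 = s ^ 2 → G (Fin.insertNth (α := fun _ => ℝ) i t y) = 0 := by
        intro t ht
        apply hG0
        · rw [(hcoord t y).1]; nlinarith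
        · rw [(hcoord t y).2]; exact hy1
      rw [hfun, integral_indicator measurableSet_Ioo, ← integral_Ioc_eq_integral_Ioo,
        ← intervalIntegral.integral_of_le (by linarith : -s ≤ s), hFTC, hend s rfl,
        hend (-s) (by ring), sub_zero]
    · have hz : ∀ t : ℝ, ((solidCyl a b).indicator (pd i G)) (e.symm (t, y)) = 0 := by
        intro t
        apply Set.indicator_of_notMem
        intro hc
        rw [show e.symm (t, y) = Fin.insertNth (α := fun _ => ℝ) i t y from rfl, hmem t] at hc
        exact hy ⟨by nlinarith [hc.1, sq_nonneg t], hc.2⟩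
      simp [hz]
  calc ∫ x in solidCyl a b, pd i G x = ∫ x, ((solidCyl a b).indicator (pd i G)) x :=
        (integral_indicator hmeas).symm
    _ = ∫ p : ℝ × (Fin 2 → ℝ), ((solidCyl a b).indicator (pd i G)) (e.symm p) := h2.symm
    _ = ∫ p : ℝ × (Fin 2 → ℝ), ((solidCyl a b).indicator (pd i G)) (e.symm p)
          ∂(volume.prod volume) := by rw [← Measure.volume_eq_prod]
    _ = ∫ t : ℝ, ∫ y : Fin 2 → ℝ, ((solidCyl a b).indicator (pd i G)) (e.symm (t, y)) :=
        integral_prod _ hcomp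
    _ = ∫ y : Fin 2 → ℝ, ∫ t : ℝ, ((solidCyl a b).indicator (pd i G)) (e.symm (t, y)) :=
        integral_integral_swap hcomp
    _ = 0 := by simp [hinner]

lemma pd_mul {f g : (Fin 3 → ℝ) → ℝ} {x : Fin 3 → ℝ} (hf : DifferentiableAt ℝ f x)
    (hg : DifferentiableAt ℝ g x) (i : Fin 3) :
    pd i (fun y => f y * g y) x = pd i f x * g x + f x * pd i g x := by
  simp only [pd, fderiv_fun_mul hf hg, ContinuousLinearMap.add_apply,
    ContinuousLinearMap.smul_apply, smul_eq_mul]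
  ring

lemma pd_add {f g : (Fin 3 → ℝ) → ℝ} {x : Fin 3 → ℝ} (hf : DifferentiableAt ℝ f x)
    (hg : DifferentiableAt ℝ g x) (i : Fin 3) :
    pd i (fun y => f y + g y) x = pd i f x + pd i g x := by
  simp [pd, fderiv_fun_add hf hg]

lemma pd_coord (x : Fin 3 → ℝ) (i j : Fin 3) :
    pd i (fun y => y j) x = if i = j then 1 else 0 := by
  have h : (fun y : Fin 3 → ℝ => y j)
      = fun y => (ContinuousLinearMap.proj (R := ℝ) (φ := fun _ : Fin 3 => ℝ) j) y := rfl
  rw [pd, h, ContinuousLinearMap.fderiv]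
  simp [Pi.single_apply, eq_comm]

lemma diff_coord (x : Fin 3 → ℝ) (j : Fin 3) :
    DifferentiableAt ℝ (fun y : Fin 3 → ℝ => y j) x :=
  (ContinuousLinearMap.proj (R := ℝ) (φ := fun _ : Fin 3 => ℝ) j).differentiableAt

lemma pd_expand {U : Set (Fin 3 → ℝ)} (hU : IsOpen U) (w : (Fin 3 → ℝ) → (Fin 3 → ℝ))
    (hw : ContDiffOn ℝ 1 w U) (x : Fin 3 → ℝ) (hx : x ∈ U) :
    pd 0 (fun y => (y 0 * w y 0 + y 1 * w y 1) * w y 0) x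
      + pd 1 (fun y => (y 0 * w y 0 + y 1 * w y 1) * w y 1) x
    = w x 0 ^ 2 + w x 1 ^ 2
      + w x 0 * (x 0 * pd 0 (fun y => w y 0) x + x 1 * pd 0 (fun y => w y 1) x)
      + w x 1 * (x 0 * pd 1 (fun y => w y 0) x + x 1 * pd 1 (fun y => w y 1) x)
      + (x 0 * w x 0 + x 1 * w x 1)
          * (pd 0 (fun y => w y 0) x + pd 1 (fun y => w y 1) x) := by
  have hwc : ∀ j : Fin 3, ContDiffOn ℝ 1 (fun y => w y j) U := fun j =>
    (ContinuousLinearMap.proj (R := ℝ) (φ := fun _ : Fin 3 => ℝ) j).contDiff.comp_contDiffOn hw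
  have hwd : ∀ j : Fin 3, DifferentiableAt ℝ (fun y => w y j) x := fun j =>
    ((hwc j).differentiableOn one_ne_zero).differentiableAt (hU.mem_nhds hx)
  have hd0 : DifferentiableAt ℝ (fun y : Fin 3 → ℝ => y 0 * w y 0) x :=
    (diff_coord x 0).mul (hwd 0)
  have hd1 : DifferentiableAt ℝ (fun y : Fin 3 → ℝ => y 1 * w y 1) x :=
    (diff_coord x 1).mul (hwd 1)
  have hdu : DifferentiableAt ℝ (fun y : Fin 3 → ℝ => y 0 * w y 0 + y 1 * w y 1) x := hd0.add hd1
  have e1 : ∀ i : Fin 3, pd i (fun y : Fin 3 → ℝ => y 0 * w y 0 + y 1 * w y 1) x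
      = (if i = 0 then 1 else 0) * w x 0 + x 0 * pd i (fun y => w y 0) x
        + ((if i = 1 then 1 else 0) * w x 1 + x 1 * pd i (fun y => w y 1) x) := by
    intro i
    rw [pd_add hd0 hd1, pd_mul (diff_coord x 0) (hwd 0), pd_mul (diff_coord x 1) (hwd 1),
      pd_coord, pd_coord]
  rw [pd_mul hdu (hwd 0), pd_mul hdu (hwd 1), e1 0, e1 1]
  norm_num
  ring

lemma pointwise_ineq (w0 w1 x0 x1 A B C D E : ℝ) (h : x0 ^ 2 + x1 ^ 2 ≤ 1)
    (hAD : A + D = -E) :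
    (w0 ^ 2 + w1 ^ 2)
      - (w0 ^ 2 + w1 ^ 2 + w0 * (x0 * A + x1 * B) + w1 * (x0 * C + x1 * D)
          + (x0 * w0 + x1 * w1) * (A + D))
    ≤ (w0 ^ 2 + w1 ^ 2) / 2 + (A ^ 2 + B ^ 2 + C ^ 2 + D ^ 2 + E ^ 2) := by
  rw [hAD]
  nlinarith [sq_nonneg (w0*x0/2 + A), sq_nonneg (w0*x1/2 + B), sq_nonneg (w1*x0/2 + C),
    sq_nonneg (w1*x1/2 + D), sq_nonneg ((x0*w0+x1*w1)/2 - E), sq_nonneg (w0*x1 - w1*x0),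
    mul_nonneg (sq_nonneg w0) (sub_nonneg.2 h), mul_nonneg (sq_nonneg w1) (sub_nonneg.2 h)]

end Stmt12Aux

open Stmt12Aux

/-- Poincaré-type inequality for the horizontal components:
if `w` is `C¹` on a neighborhood of the closed cylinder `D̄ × [a,b]`, divergence free
there, and its horizontal part is tangent to the lateral boundary, then
`∫ (w₁² + w₂²) ≤ 2 ∫ ( Σ_{i,j=1}^{2} (∂_i w_j)² + (∂₃ w₃)² )` over `D × [a,b]`. -/
theorem stmt12 (a b : ℝ) (hab : a < b) (w : (Fin 3 → ℝ) → (Fin 3 → ℝ))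
    (U : Set (Fin 3 → ℝ)) (hU : IsOpen U) (hsub : closedCyl a b ⊆ U)
    (hw : ContDiffOn ℝ 1 w U)
    (hdiv : ∀ x ∈ closedCyl a b, ∑ j : Fin 3, pd j (fun y => w y j) x = 0)
    (hbc : ∀ x : Fin 3 → ℝ, x 0 ^ 2 + x 1 ^ 2 = 1 → x 2 ∈ Set.Icc a b →
      w x 0 * x 0 + w x 1 * x 1 = 0) :
    (∫ x in solidCyl a b, (w x 0 ^ 2 + w x 1 ^ 2)) ≤
      2 * ∫ x in solidCyl a b,
        ((pd 0 (fun y => w y 0) x) ^ 2 + (pd 0 (fun y => w y 1) x) ^ 2 +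
         (pd 1 (fun y => w y 0) x) ^ 2 + (pd 1 (fun y => w y 1) x) ^ 2 +
         (pd 2 (fun y => w y 2) x) ^ 2) := by
  classical
  have hwc : ∀ j : Fin 3, ContDiffOn ℝ 1 (fun y => w y j) U := fun j =>
    (ContinuousLinearMap.proj (R := ℝ) (φ := fun _ : Fin 3 => ℝ) j).contDiff.comp_contDiffOn hw
  have hcoordC : ∀ j : Fin 3, ContDiffOn ℝ 1 (fun y : Fin 3 → ℝ => y j) U :=
    fun j => (ContinuousLinearMap.proj (R := ℝ) (φ := fun _ : Fin 3 => ℝ) j).contDiff.contDiffOn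
  -- the two auxiliary fields
  set F0 : (Fin 3 → ℝ) → ℝ := fun y => (y 0 * w y 0 + y 1 * w y 1) * w y 0 with hF0def
  set F1 : (Fin 3 → ℝ) → ℝ := fun y => (y 0 * w y 0 + y 1 * w y 1) * w y 1 with hF1def
  have hF0c : ContDiffOn ℝ 1 F0 U :=
    (((hcoordC 0).mul (hwc 0)).add ((hcoordC 1).mul (hwc 1))).mul (hwc 0)
  have hF1c : ContDiffOn ℝ 1 F1 U :=
    (((hcoordC 0).mul (hwc 0)).add ((hcoordC 1).mul (hwc 1))).mul (hwc 1)
  have hbc' : ∀ x : Fin 3 → ℝ, x 0 ^ 2 + x 1 ^ 2 = 1 → x 2 ∈ Set.Icc a b →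
      x 0 * w x 0 + x 1 * w x 1 = 0 := by
    intro x h1 h2
    have h := hbc x h1 h2
    linear_combination h
  have hF00 : ∀ x : Fin 3 → ℝ, x 0 ^ 2 + x 1 ^ 2 = 1 → x 2 ∈ Set.Icc a b → F0 x = 0 := by
    intro x h1 h2
    show (x 0 * w x 0 + x 1 * w x 1) * w x 0 = 0
    rw [hbc' x h1 h2, zero_mul]
  have hF10 : ∀ x : Fin 3 → ℝ, x 0 ^ 2 + x 1 ^ 2 = 1 → x 2 ∈ Set.Icc a b → F1 x = 0 := by
    intro x h1 h2
    show (x 0 * w x 0 + x 1 * w x 1) * w x 1 = 0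
    rw [hbc' x h1 h2, zero_mul]
  have hI0 : ∫ x in solidCyl a b, pd 0 F0 x = 0 :=
    integral_pd_eq_zero hU hsub hF0c hF00 0 (Or.inl rfl)
  have hI1 : ∫ x in solidCyl a b, pd 1 F1 x = 0 :=
    integral_pd_eq_zero hU hsub hF1c hF10 1 (Or.inr rfl)
  -- continuity and integrability
  have hwcont : ∀ j : Fin 3, ContinuousOn (fun y => w y j) (closedCyl a b) :=
    fun j => ((hwc j).continuousOn).mono hsub
  have hpdcont : ∀ (i j : Fin 3), ContinuousOn (pd i (fun y => w y j)) (closedCyl a b) :=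
    fun i j => (pd_continuousOn hU (hwc j) i).mono hsub
  set W : (Fin 3 → ℝ) → ℝ := fun x => w x 0 ^ 2 + w x 1 ^ 2 with hWdef
  set S : (Fin 3 → ℝ) → ℝ := fun x =>
    (pd 0 (fun y => w y 0) x) ^ 2 + (pd 0 (fun y => w y 1) x) ^ 2 +
    (pd 1 (fun y => w y 0) x) ^ 2 + (pd 1 (fun y => w y 1) x) ^ 2 +
    (pd 2 (fun y => w y 2) x) ^ 2 with hSdef
  set g : (Fin 3 → ℝ) → ℝ := fun x => pd 0 F0 x + pd 1 F1 x with hgdef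
  have hWcont : ContinuousOn W (closedCyl a b) := ((hwcont 0).pow 2).add ((hwcont 1).pow 2)
  have hScont : ContinuousOn S (closedCyl a b) :=
    (((((hpdcont 0 0).pow 2).add ((hpdcont 0 1).pow 2)).add ((hpdcont 1 0).pow 2)).add
      ((hpdcont 1 1).pow 2)).add ((hpdcont 2 2).pow 2)
  have hgcont : ContinuousOn g (closedCyl a b) :=
    ((pd_continuousOn hU hF0c 0).mono hsub).add ((pd_continuousOn hU hF1c 1).mono hsub)
  have iW : IntegrableOn W (solidCyl a b) := integrableOn_cyl hWcont
  have iS : IntegrableOn S (solidCyl a b) := integrableOn_cyl hScont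
  have ig : IntegrableOn g (solidCyl a b) := integrableOn_cyl hgcont
  have ig0 : IntegrableOn (fun x => pd 0 F0 x) (solidCyl a b) :=
    integrableOn_cyl ((pd_continuousOn hU hF0c 0).mono hsub)
  have ig1 : IntegrableOn (fun x => pd 1 F1 x) (solidCyl a b) :=
    integrableOn_cyl ((pd_continuousOn hU hF1c 1).mono hsub)
  have hIg : ∫ x in solidCyl a b, g x = 0 := by
    rw [hgdef]
    rw [integral_add ig0 ig1, hI0, hI1, add_zero]
  -- pointwise inequality on the solid cylinder
  have hpt : ∀ x ∈ solidCyl a b, W x - g x ≤ W x / 2 + S x := by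
    intro x hx
    have hxC : x ∈ closedCyl a b := solidCyl_subset_closed a b hx
    have hxU : x ∈ U := hsub hxC
    have hAD : pd 0 (fun y => w y 0) x + pd 1 (fun y => w y 1) x
        = -(pd 2 (fun y => w y 2) x) := by
      have h := hdiv x hxC
      rw [Fin.sum_univ_three] at h
      linarith
    have hexp := pd_expand hU w hw x hxU
    show W x - (pd 0 F0 x + pd 1 F1 x) ≤ W x / 2 + S x
    rw [hF0def, hF1def]
    rw [hexp]
    exact pointwise_ineq (w x 0) (w x 1) (x 0) (x 1) _ _ _ _ _ hx.1.le hAD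
  -- put it together
  have hmeas := measurableSet_solidCyl a b
  have hsplit : ∫ x in solidCyl a b, W x = ∫ x in solidCyl a b, (W x - g x) := by
    rw [integral_sub iW ig, hIg, sub_zero]
  have hmono : ∫ x in solidCyl a b, (W x - g x) ≤ ∫ x in solidCyl a b, (W x / 2 + S x) :=
    setIntegral_mono_on (iW.sub ig) ((iW.div_const 2).add iS) hmeas hpt
  have hrhs : ∫ x in solidCyl a b, (W x / 2 + S x)
      = (∫ x in solidCyl a b, W x) / 2 + ∫ x in solidCyl a b, S x := by
    rw [integral_add (iW.div_const 2) iS, integral_div]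
  have hfin : ∫ x in solidCyl a b, W x ≤ 2 * ∫ x in solidCyl a b, S x := by
    rw [hsplit]
    rw [hrhs] at hmono
    rw [← hsplit] at hmono
    linarith
  exact hfin
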